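/- Suppose ε₁ ≠ 0 and ε₃² = ε₁ε₂. Then the linear map acting as the identity on the basis elements e_i (1 ≤ i ≤ n), I, and l_{ij}, and sending e_{n+i} ↦ e_{n+i} + √(ε₂/ε₁) e_i, is a Lie algebra isomorphism from g_n^ℂ(ε₁, 0, 0) to g_n^ℂ(ε₁, ε₂, ε₃), for an appropriate choice of square root with ε₃ = √(ε₁)·√(ε₂) conventions. -/

import Mathlib

open Matrix

/-- The underlying space of `g_n^ℂ(ε₁,ε₂,ε₃)`, in coordinates: `(A, v, w, s)`
where `A` is the (antisymmetric) coefficient matrix of `Σ_{i<j} A i j • l_{ij}`,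
`v` the coefficient vector of `Σ v i • e_i`, `w` that of `Σ w i • e_{n+i}`,
and `s` the coefficient of `I`. -/
abbrev GAmb (n : ℕ) := Matrix (Fin n) (Fin n) ℂ × (Fin n → ℂ) × (Fin n → ℂ) × ℂ

/-- The deformed bracket of `g_n^ℂ(ε₁,ε₂,ε₃)`, in coordinates.  It encodes the
structure constants: standard `o(n,ℂ)` relations among the `l_{ij}`;
`[l_{ij},e_k] = δ_{ik}e_j − δ_{jk}e_i`, `[l_{ij},e_{n+k}] = δ_{ik}e_{n+j} − δ_{jk}e_{n+i}`,
`[l_{ij},I] = 0`; `[e_i,e_j] = ε₁ l_{ij}`, `[e_{n+i},e_{n+j}] = ε₂ l_{ij}`,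
`[e_i,e_{n+j}] = δ_{ij} I + ε₃ l_{ij}`, `[e_i,I] = ε₃ e_i − ε₁ e_{n+i}`,
`[e_{n+i},I] = ε₂ e_i − ε₃ e_{n+i}`. -/
noncomputable def gBr (n : ℕ) (e1 e2 e3 : ℂ) (X Y : GAmb n) : GAmb n :=
  ( Y.1 * X.1 - X.1 * Y.1
      + e1 • (Matrix.vecMulVec X.2.1 Y.2.1 - Matrix.vecMulVec Y.2.1 X.2.1)
      + e2 • (Matrix.vecMulVec X.2.2.1 Y.2.2.1 - Matrix.vecMulVec Y.2.2.1 X.2.2.1)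
      + e3 • (Matrix.vecMulVec X.2.1 Y.2.2.1 - Matrix.vecMulVec Y.2.2.1 X.2.1)
      + e3 • (Matrix.vecMulVec X.2.2.1 Y.2.1 - Matrix.vecMulVec Y.2.1 X.2.2.1),
    - X.1.mulVec Y.2.1 + Y.1.mulVec X.2.1
      + e3 • (Y.2.2.2 • X.2.1 - X.2.2.2 • Y.2.1)
      + e2 • (Y.2.2.2 • X.2.2.1 - X.2.2.2 • Y.2.2.1),
    - X.1.mulVec Y.2.2.1 + Y.1.mulVec X.2.2.1
      - e1 • (Y.2.2.2 • X.2.1 - X.2.2.2 • Y.2.1)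
      - e3 • (Y.2.2.2 • X.2.2.1 - X.2.2.2 • Y.2.2.1),
    (∑ i, X.2.1 i * Y.2.2.1 i) - (∑ i, Y.2.1 i * X.2.2.1 i) )

/-- Suppose `ε₁ ≠ 0` and `ε₃² = ε₁ε₂`.  With the appropriate
square root `c` of `ε₂/ε₁` (conventions `ε₃ = √ε₁·√ε₂`, i.e. `ε₃ = −c·ε₁` for
this choice of `c`), the linear map acting as the identity on the `e_i`
(`1 ≤ i ≤ n`), on `I` and on the `l_{ij}`, and sending
`e_{n+i} ↦ e_{n+i} + √(ε₂/ε₁) e_i`, is a Lie algebra isomorphism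
`g_n^ℂ(ε₁,0,0) → g_n^ℂ(ε₁,ε₂,ε₃)`. -/
theorem g_conic_iso (n : ℕ) (hn : 3 ≤ n) (e1 e2 e3 c : ℂ)
    (h1 : e1 ≠ 0) (hconic : e3 ^ 2 = e1 * e2)
    (hc : c ^ 2 = e2 / e1) (hc3 : e3 = -(c * e1)) :
    let ψ : GAmb n → GAmb n := fun X =>
      (X.1, X.2.1 + c • X.2.2.1, X.2.2.1, X.2.2.2)
    Set.BijOn ψ {X : GAmb n | X.1ᵀ = -X.1} {X : GAmb n | X.1ᵀ = -X.1} ∧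
      ∀ X Y : GAmb n, X.1ᵀ = -X.1 → Y.1ᵀ = -Y.1 →
        ψ (gBr n e1 0 0 X Y) = gBr n e1 e2 e3 (ψ X) (ψ Y) := by
  intro ψ
  have he2 : e2 = c ^ 2 * e1 := by
    field_simp at hc
    exact hc.symm
  subst he2 hc3
  constructor
  · refine ⟨fun X hX => hX, fun X _ Y _ h => ?_, fun X hX => ⟨(X.1, X.2.1 - c • X.2.2.1, X.2.2.1, X.2.2.2), hX, ?_⟩⟩
    · simp only [ψ, Prod.mk.injEq] at h
      obtain ⟨h1', h2, h3, h4⟩ := h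
      have h2' : X.2.1 = Y.2.1 := by
        rw [h3] at h2
        exact add_right_cancel h2
      exact Prod.ext h1' (Prod.ext h2' (Prod.ext h3 h4))
    · show (X.1, (X.2.1 - c • X.2.2.1) + c • X.2.2.1, X.2.2.1, X.2.2.2) = X
      simp
  · intro X Y _ _
    obtain ⟨A, v, w, s⟩ := X
    obtain ⟨B, v', w', s'⟩ := Y
    show ((_ : Matrix (Fin n) (Fin n) ℂ), (_ : Fin n → ℂ), (_ : Fin n → ℂ), (_ : ℂ))
      = ((_ : Matrix (Fin n) (Fin n) ℂ), (_ : Fin n → ℂ), (_ : Fin n → ℂ), (_ : ℂ))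
    refine Prod.ext ?_ (Prod.ext ?_ (Prod.ext ?_ ?_))
    · simp only [gBr, ψ]
      funext i j
      simp [Matrix.vecMulVec_apply, Matrix.add_apply, Matrix.sub_apply, Matrix.smul_apply,
        Pi.add_apply, Pi.smul_apply, smul_eq_mul]
      ring
    · simp only [gBr, ψ]
      funext i
      simp [Matrix.mulVec_add, Matrix.mulVec_smul, Pi.add_apply, Pi.sub_apply, Pi.smul_apply,
        Pi.neg_apply, smul_eq_mul]
      ring
    · simp only [gBr, ψ]
      funext i
      simp [Matrix.mulVec_add, Matrix.mulVec_smul, Pi.add_apply, Pi.sub_apply, Pi.smul_apply,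
        Pi.neg_apply, smul_eq_mul]
      ring
    · simp only [gBr, ψ]
      simp only [Pi.add_apply, Pi.smul_apply, smul_eq_mul, add_mul, mul_add,
        Finset.sum_add_distrib, Finset.mul_sum]
      have hcomm : ∑ x : Fin n, c * w' x * w x = ∑ x : Fin n, c * w x * w' x :=
        Finset.sum_congr rfl (fun x _ => by ring)
      rw [hcomm]
      ring
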